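/- The sum index of the n × m rectangular grid graph equals 3 if m = 2 (ladder graphs), and equals 4 if 3 ≤ m ≤ n. -/

import Mathlib

open SimpleGraph Function

def edgePlus {V : Type*} (f : V → ℤ) : Sym2 V → ℤ :=
  Sym2.lift ⟨fun u v => f u + f v, fun u v => by ring⟩

def edgeMinus {V : Type*} (f : V → ℤ) : Sym2 V → ℤ :=
  Sym2.lift ⟨fun u v => |f u - f v|, fun u v => abs_sub_comm _ _⟩

/-- The sum index: the minimum, over injective vertex labelings `f : V → ℤ`,
of the number of distinct values of `f⁺(uv) = f u + f v` on the edges. -/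
noncomputable def sumIndex {V : Type*} (G : SimpleGraph V) : ℕ :=
  sInf {k | ∃ f : V → ℤ, Function.Injective f ∧ (edgePlus f '' G.edgeSet).ncard = k}

/-- The difference index: the minimum, over injective vertex labelings `f : V → ℤ`,
of the number of distinct values of `f⁻(uv) = |f u − f v|` on the edges. -/
noncomputable def diffIndex {V : Type*} (G : SimpleGraph V) : ℕ :=
  sInf {k | ∃ f : V → ℤ, Function.Injective f ∧ (edgeMinus f '' G.edgeSet).ncard = k}

/-- The `n × m` rectangular grid graph. -/
def gridGraph (n m : ℕ) : SimpleGraph (Fin n × Fin m) :=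
  SimpleGraph.fromRel (fun p q => |(p.1 : ℤ) - (q.1 : ℤ)| + |(p.2 : ℤ) - (q.2 : ℤ)| = 1)

lemma edgePlus_mk {V : Type*} (f : V → ℤ) (a b : V) : edgePlus f s(a, b) = f a + f b := rfl

lemma grid_adj_iff {n m : ℕ} (p q : Fin n × Fin m) :
    (gridGraph n m).Adj p q ↔ |(p.1 : ℤ) - (q.1 : ℤ)| + |(p.2 : ℤ) - (q.2 : ℤ)| = 1 := by
  simp only [gridGraph, fromRel_adj]
  constructor
  · rintro ⟨-, h | h⟩
    · exact h
    · simpa [abs_sub_comm] using h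
  · intro h
    refine ⟨?_, Or.inl h⟩
    rintro rfl
    simp at h

lemma grid_adj_cases {n m : ℕ} {p q : Fin n × Fin m} (h : (gridGraph n m).Adj p q) :
    (p.1.val = q.1.val ∧ (p.2.val = q.2.val + 1 ∨ q.2.val = p.2.val + 1)) ∨
    (p.2.val = q.2.val ∧ (p.1.val = q.1.val + 1 ∨ q.1.val = p.1.val + 1)) := by
  rw [grid_adj_iff] at h
  have h' : |((p.1.val : ℤ)) - (q.1.val : ℤ)| + |((p.2.val : ℤ)) - (q.2.val : ℤ)| = 1 := h
  rcases abs_cases (((p.1.val : ℤ)) - (q.1.val : ℤ)) with ⟨e1, f1⟩ | ⟨e1, f1⟩ <;>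
    rcases abs_cases (((p.2.val : ℤ)) - (q.2.val : ℤ)) with ⟨e2, f2⟩ | ⟨e2, f2⟩ <;>
    rw [e1, e2] at h' <;> omega

lemma grid_adj_of_nat {n m : ℕ} (p q : Fin n × Fin m)
    (h : (p.1.val = q.1.val ∧ (p.2.val = q.2.val + 1 ∨ q.2.val = p.2.val + 1)) ∨
         (p.2.val = q.2.val ∧ (p.1.val = q.1.val + 1 ∨ q.1.val = p.1.val + 1))) :
    (gridGraph n m).Adj p q := by
  rw [grid_adj_iff]
  show |((p.1.val : ℤ)) - (q.1.val : ℤ)| + |((p.2.val : ℤ)) - (q.2.val : ℤ)| = 1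
  rcases h with ⟨h1, h2 | h2⟩ | ⟨h1, h2 | h2⟩
  · rw [show ((p.1.val : ℤ)) - (q.1.val : ℤ) = 0 by omega,
      show ((p.2.val : ℤ)) - (q.2.val : ℤ) = 1 by omega]; norm_num
  · rw [show ((p.1.val : ℤ)) - (q.1.val : ℤ) = 0 by omega,
      show ((p.2.val : ℤ)) - (q.2.val : ℤ) = -1 by omega]; norm_num
  · rw [show ((p.1.val : ℤ)) - (q.1.val : ℤ) = 1 by omega,
      show ((p.2.val : ℤ)) - (q.2.val : ℤ) = 0 by omega]; norm_num
  · rw [show ((p.1.val : ℤ)) - (q.1.val : ℤ) = -1 by omega,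
      show ((p.2.val : ℤ)) - (q.2.val : ℤ) = 0 by omega]; norm_num

lemma ncard_ge_three {S : Set ℤ} (hS : S.Finite) {x y z : ℤ}
    (hx : x ∈ S) (hy : y ∈ S) (hz : z ∈ S) (hxy : x ≠ y) (hxz : x ≠ z) (hyz : y ≠ z) :
    3 ≤ S.ncard := by
  have hsub : ({x, y, z} : Set ℤ) ⊆ S := by
    intro t ht
    simp only [Set.mem_insert_iff, Set.mem_singleton_iff] at ht
    rcases ht with rfl | rfl | rfl <;> assumption
  have h3 : ({x, y, z} : Set ℤ).ncard = 3 := by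
    rw [Set.ncard_insert_of_notMem (by simp [hxy, hxz]),
      Set.ncard_insert_of_notMem (by simp [hyz]), Set.ncard_singleton]
  have := Set.ncard_le_ncard hsub hS
  omega

lemma ncard_ge_four {S : Set ℤ} (hS : S.Finite) {x y z w : ℤ}
    (hx : x ∈ S) (hy : y ∈ S) (hz : z ∈ S) (hw : w ∈ S)
    (hxy : x ≠ y) (hxz : x ≠ z) (hxw : x ≠ w) (hyz : y ≠ z) (hyw : y ≠ w) (hzw : z ≠ w) :
    4 ≤ S.ncard := by
  have hsub : ({x, y, z, w} : Set ℤ) ⊆ S := by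
    intro t ht
    simp only [Set.mem_insert_iff, Set.mem_singleton_iff] at ht
    rcases ht with rfl | rfl | rfl | rfl <;> assumption
  have h4 : ({x, y, z, w} : Set ℤ).ncard = 4 := by
    rw [Set.ncard_insert_of_notMem (by simp [hxy, hxz, hxw]),
      Set.ncard_insert_of_notMem (by simp [hyz, hyw]),
      Set.ncard_insert_of_notMem (by simp [hzw]), Set.ncard_singleton]
  have := Set.ncard_le_ncard hsub hS
  omega

/-- any injective labeling of a grid (n,m ≥ 2) has at least 3 sums, via the 4-cycle. -/
lemma lower_three {n m : ℕ} (hn : 2 ≤ n) (hm : 2 ≤ m) (f : Fin n × Fin m → ℤ)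
    (hf : Injective f) : 3 ≤ (edgePlus f '' (gridGraph n m).edgeSet).ncard := by
  set G := gridGraph n m
  set S := edgePlus f '' G.edgeSet with hS
  have hmem : ∀ p q : Fin n × Fin m, G.Adj p q → f p + f q ∈ S := by
    intro p q h
    exact ⟨s(p, q), h, rfl⟩
  have hfin : S.Finite := Set.toFinite _
  set a : Fin n × Fin m := (⟨0, by omega⟩, ⟨0, by omega⟩) with ha
  set b : Fin n × Fin m := (⟨0, by omega⟩, ⟨1, by omega⟩) with hb
  set c : Fin n × Fin m := (⟨1, by omega⟩, ⟨1, by omega⟩) with hc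
  set d : Fin n × Fin m := (⟨1, by omega⟩, ⟨0, by omega⟩) with hd
  have hab : G.Adj a b := grid_adj_of_nat _ _ (by simp [ha, hb])
  have hbc : G.Adj b c := grid_adj_of_nat _ _ (by simp [hb, hc])
  have hcd : G.Adj c d := grid_adj_of_nat _ _ (by simp [hc, hd])
  have hda : G.Adj d a := grid_adj_of_nat _ _ (by simp [hd, ha])
  have hac : f a ≠ f c := fun h => by
    have := hf h
    simp [ha, hc, Prod.ext_iff, Fin.ext_iff] at this
  have hbd : f b ≠ f d := fun h => by
    have := hf h
    simp [hb, hd, Prod.ext_iff, Fin.ext_iff] at this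
  by_cases h13 : f a + f b = f c + f d
  · refine ncard_ge_three hfin (hmem a b hab) (hmem b c hbc) (hmem d a hda) ?_ ?_ ?_
    · intro h; exact hac (by linarith)
    · intro h; exact hbd (by linarith)
    · intro h; exact hac (by linarith)
  · refine ncard_ge_three hfin (hmem a b hab) (hmem b c hbc) (hmem c d hcd) ?_ h13 ?_
    · intro h; exact hac (by linarith)
    · intro h; exact hbd (by linarith)

/-- any injective labeling of a grid with n,m ≥ 3 has at least 4 sums, via a degree-4 vertex. -/
lemma lower_four {n m : ℕ} (hn : 3 ≤ n) (hm : 3 ≤ m) (f : Fin n × Fin m → ℤ)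
    (hf : Injective f) : 4 ≤ (edgePlus f '' (gridGraph n m).edgeSet).ncard := by
  set G := gridGraph n m
  set S := edgePlus f '' G.edgeSet with hS
  have hmem : ∀ p q : Fin n × Fin m, G.Adj p q → f p + f q ∈ S := by
    intro p q h
    exact ⟨s(p, q), h, rfl⟩
  have hfin : S.Finite := Set.toFinite _
  set v : Fin n × Fin m := (⟨1, by omega⟩, ⟨1, by omega⟩) with hv
  set a : Fin n × Fin m := (⟨0, by omega⟩, ⟨1, by omega⟩) with ha
  set b : Fin n × Fin m := (⟨2, by omega⟩, ⟨1, by omega⟩) with hb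
  set c : Fin n × Fin m := (⟨1, by omega⟩, ⟨0, by omega⟩) with hc
  set d : Fin n × Fin m := (⟨1, by omega⟩, ⟨2, by omega⟩) with hd
  have hva : G.Adj v a := grid_adj_of_nat _ _ (by simp [hv, ha])
  have hvb : G.Adj v b := grid_adj_of_nat _ _ (by simp [hv, hb])
  have hvc : G.Adj v c := grid_adj_of_nat _ _ (by simp [hv, hc])
  have hvd : G.Adj v d := grid_adj_of_nat _ _ (by simp [hv, hd])
  have key : ∀ x y : Fin n × Fin m, x ≠ y → f v + f x ≠ f v + f y := by
    intro x y hxy h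
    exact hxy (hf (by linarith))
  refine ncard_ge_four hfin (hmem v a hva) (hmem v b hvb) (hmem v c hvc) (hmem v d hvd)
    (key a b ?_) (key a c ?_) (key a d ?_) (key b c ?_) (key b d ?_) (key c d ?_) <;>
    simp [ha, hb, hc, hd, Prod.ext_iff, Fin.ext_iff]

lemma upper_ladder (n : ℕ) (hn : 2 ≤ n) :
    ∃ f : Fin n × Fin 2 → ℤ, Injective f ∧ (edgePlus f '' (gridGraph n 2).edgeSet).ncard = 3 := by
  set M : ℤ := (n : ℤ) with hMdef
  have hM2 : (2 : ℤ) ≤ M := by rw [hMdef]; exact_mod_cast hn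
  set f : Fin n × Fin 2 → ℤ := fun p => (-1) ^ (p.1.val + p.2.val) * (M * p.1.val + 1) with hfdef
  have hfapp : ∀ p : Fin n × Fin 2, f p = (-1) ^ (p.1.val + p.2.val) * (M * p.1.val + 1) :=
    fun p => rfl
  have hinj : Injective f := by
    intro p q h
    have hA : ∀ r : Fin n × Fin 2, |(M * (r.1.val : ℤ) + 1)| = M * r.1.val + 1 :=
      fun r => abs_of_nonneg (by positivity)
    have habs := congrArg abs h
    rw [hfapp, hfapp] at habs
    simp only [abs_mul, abs_pow, abs_neg, abs_one, one_pow, one_mul, hA] at habs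
    have h1 : p.1.val = q.1.val := by
      have h1' : M * (p.1.val : ℤ) = M * q.1.val := by linarith
      have := mul_left_cancel₀ (by omega : M ≠ 0) h1'
      exact_mod_cast this
    rw [hfapp, hfapp, ← h1] at h
    have hA0 : (M * (p.1.val : ℤ) + 1) ≠ 0 := by positivity
    have hs := mul_right_cancel₀ hA0 h
    have hp2 := p.2.isLt
    have hq2 := q.2.isLt
    have h2 : p.2.val = q.2.val := by
      by_contra hne
      have hpow := pow_ne_zero (p.1.val) (show (-1 : ℤ) ≠ 0 by norm_num)
      rcases (by omega : p.2.val = 0 ∧ q.2.val = 1 ∨ p.2.val = 1 ∧ q.2.val = 0) with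
        ⟨e1, e2⟩ | ⟨e1, e2⟩ <;> rw [e1, e2] at hs
      · rw [add_zero, pow_succ] at hs
        have : ((-1 : ℤ)) ^ p.1.val = 0 := by linarith
        exact hpow this
      · rw [add_zero, pow_succ] at hs
        have : ((-1 : ℤ)) ^ p.1.val = 0 := by linarith
        exact hpow this
    exact Prod.ext_iff.mpr ⟨Fin.ext h1, Fin.ext h2⟩
  have claimV : ∀ p q : Fin n × Fin 2, p.1.val = q.1.val → q.2.val = p.2.val + 1 →
      f p + f q = 0 := by
    intro p q h1 h2
    have he : p.1.val + (p.2.val + 1) = (p.1.val + p.2.val) + 1 := by omega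
    rw [hfapp, hfapp, ← h1, h2, he, pow_succ]
    ring
  have claimH : ∀ p q : Fin n × Fin 2, p.2.val = q.2.val → q.1.val = p.1.val + 1 →
      f p + f q = -((-1 : ℤ)) ^ (p.1.val + p.2.val) * M := by
    intro p q h1 h2
    rw [hfapp, hfapp, h2, ← h1]
    have he : p.1.val + 1 + p.2.val = (p.1.val + p.2.val) + 1 := by omega
    rw [he, pow_succ]
    push_cast
    ring
  have himg : edgePlus f '' (gridGraph n 2).edgeSet = {0, M, -M} := by
    apply Set.Subset.antisymm
    · intro x hx
      obtain ⟨e, he, rfl⟩ := hx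
      revert he
      refine Sym2.ind (fun p q => ?_) e
      intro he
      rw [SimpleGraph.mem_edgeSet] at he
      rw [edgePlus_mk]
      have hsign : ∀ k : ℕ, -((-1 : ℤ)) ^ k * M ∈ ({0, M, -M} : Set ℤ) := by
        intro k
        rcases Nat.even_or_odd k with hk | hk
        · rw [hk.neg_one_pow]; simp
        · rw [hk.neg_one_pow]; simp
      rcases grid_adj_cases he with ⟨h1, h2 | h2⟩ | ⟨h1, h2 | h2⟩
      · rw [add_comm (f p) (f q), claimV q p h1.symm h2]; simp
      · rw [claimV p q h1 h2]; simp
      · rw [add_comm (f p) (f q), claimH q p h1.symm h2]; exact hsign _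
      · rw [claimH p q h1 h2]; exact hsign _
    · have hmem : ∀ p q : Fin n × Fin 2, (gridGraph n 2).Adj p q →
          f p + f q ∈ edgePlus f '' (gridGraph n 2).edgeSet :=
        fun p q h => ⟨s(p, q), h, rfl⟩
      intro x hx
      simp only [Set.mem_insert_iff, Set.mem_singleton_iff] at hx
      rcases hx with rfl | rfl | rfl
      · have h0 := hmem (⟨0, by omega⟩, ⟨0, by omega⟩) (⟨0, by omega⟩, ⟨1, by omega⟩)
          (grid_adj_of_nat _ _ (by simp))
        rw [hfapp, hfapp] at h0
        norm_num at h0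
        exact h0
      · have h0 := hmem (⟨0, by omega⟩, ⟨1, by omega⟩) (⟨1, by omega⟩, ⟨1, by omega⟩)
          (grid_adj_of_nat _ _ (by simp))
        rw [hfapp, hfapp] at h0
        norm_num at h0
        exact h0
      · have h0 := hmem (⟨0, by omega⟩, ⟨0, by omega⟩) (⟨1, by omega⟩, ⟨0, by omega⟩)
          (grid_adj_of_nat _ _ (by simp))
        rw [hfapp, hfapp] at h0
        norm_num at h0
        exact h0
  refine ⟨f, hinj, ?_⟩
  rw [himg, Set.ncard_insert_of_notMem
      (by simp only [Set.mem_insert_iff, Set.mem_singleton_iff]; push_neg; omega),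
    Set.ncard_insert_of_notMem
      (by simp only [Set.mem_singleton_iff]; omega),
    Set.ncard_singleton]

lemma upper_grid (n m : ℕ) (hm : 3 ≤ m) (hmn : m ≤ n) :
    ∃ f : Fin n × Fin m → ℤ, Injective f ∧ (edgePlus f '' (gridGraph n m).edgeSet).ncard = 4 := by
  set M : ℤ := (n : ℤ) with hMdef
  have hM3 : (3 : ℤ) ≤ M := by rw [hMdef]; exact_mod_cast le_trans hm hmn
  set f : Fin n × Fin m → ℤ :=
    fun p => (-1) ^ (p.1.val + p.2.val) * (M * ((p.1.val : ℤ) + p.2.val) + p.1.val) with hfdef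
  have hfapp : ∀ p : Fin n × Fin m,
      f p = (-1) ^ (p.1.val + p.2.val) * (M * ((p.1.val : ℤ) + p.2.val) + p.1.val) :=
    fun p => rfl
  have hinj : Injective f := by
    intro p q h
    have hA : ∀ r : Fin n × Fin m,
        |(M * ((r.1.val : ℤ) + r.2.val) + r.1.val)| = M * ((r.1.val : ℤ) + r.2.val) + r.1.val :=
      fun r => abs_of_nonneg (by positivity)
    have habs := congrArg abs h
    rw [hfapp, hfapp] at habs
    simp only [abs_mul, abs_pow, abs_neg, abs_one, one_pow, one_mul, hA] at habs
    have hpb : ((p.1.val : ℤ)) < M := by rw [hMdef]; exact_mod_cast p.1.isLt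
    have hqb : ((q.1.val : ℤ)) < M := by rw [hMdef]; exact_mod_cast q.1.isLt
    have hk : ((p.1.val : ℤ)) + p.2.val = (q.1.val : ℤ) + q.2.val := by
      rcases lt_trichotomy (((p.1.val : ℤ)) + p.2.val) ((q.1.val : ℤ) + q.2.val) with hlt | heq | hlt
    -- case 1
      · exfalso
        have : M * (((p.1.val : ℤ)) + p.2.val + 1) ≤ M * ((q.1.val : ℤ) + q.2.val) :=
          mul_le_mul_of_nonneg_left (by omega) (by omega)
        have hq0 : (0 : ℤ) ≤ q.1.val := by positivity
        nlinarith
      · exact heq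
      · exfalso
        have : M * (((q.1.val : ℤ)) + q.2.val + 1) ≤ M * ((p.1.val : ℤ) + p.2.val) :=
          mul_le_mul_of_nonneg_left (by omega) (by omega)
        have hp0 : (0 : ℤ) ≤ p.1.val := by positivity
        nlinarith
    have hi : ((p.1.val : ℤ)) = q.1.val := by
      rw [hk] at habs
      linarith
    refine Prod.ext_iff.mpr ⟨Fin.ext ?_, Fin.ext ?_⟩ <;> omega
  have claimH : ∀ p q : Fin n × Fin m, p.1.val = q.1.val → q.2.val = p.2.val + 1 →
      f p + f q = -((-1 : ℤ)) ^ (p.1.val + p.2.val) * M := by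
    intro p q h1 h2
    rw [hfapp, hfapp, ← h1, h2]
    have he : p.1.val + (p.2.val + 1) = (p.1.val + p.2.val) + 1 := by omega
    rw [he, pow_succ]
    push_cast
    ring
  have claimV : ∀ p q : Fin n × Fin m, p.2.val = q.2.val → q.1.val = p.1.val + 1 →
      f p + f q = -((-1 : ℤ)) ^ (p.1.val + p.2.val) * (M + 1) := by
    intro p q h1 h2
    rw [hfapp, hfapp, ← h1, h2]
    have he : p.1.val + 1 + p.2.val = (p.1.val + p.2.val) + 1 := by omega
    rw [he, pow_succ]
    push_cast
    ring
  have himg : edgePlus f '' (gridGraph n m).edgeSet = {M, -M, M + 1, -(M + 1)} := by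
    apply Set.Subset.antisymm
    · intro x hx
      obtain ⟨e, he, rfl⟩ := hx
      revert he
      refine Sym2.ind (fun p q => ?_) e
      intro he
      rw [SimpleGraph.mem_edgeSet] at he
      rw [edgePlus_mk]
      have hsignH : ∀ k : ℕ, -((-1 : ℤ)) ^ k * M ∈ ({M, -M, M + 1, -(M + 1)} : Set ℤ) := by
        intro k
        rcases Nat.even_or_odd k with hk | hk
        · rw [hk.neg_one_pow]; simp
        · rw [hk.neg_one_pow]; simp
      have hsignV : ∀ k : ℕ, -((-1 : ℤ)) ^ k * (M + 1) ∈ ({M, -M, M + 1, -(M + 1)} : Set ℤ) := by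
        intro k
        rcases Nat.even_or_odd k with hk | hk
        · rw [hk.neg_one_pow]; simp
        · rw [hk.neg_one_pow]; simp
      rcases grid_adj_cases he with ⟨h1, h2 | h2⟩ | ⟨h1, h2 | h2⟩
      · rw [add_comm (f p) (f q), claimH q p h1.symm h2]; exact hsignH _
      · rw [claimH p q h1 h2]; exact hsignH _
      · rw [add_comm (f p) (f q), claimV q p h1.symm h2]; exact hsignV _
      · rw [claimV p q h1 h2]; exact hsignV _
    · have hmem : ∀ p q : Fin n × Fin m, (gridGraph n m).Adj p q →
          f p + f q ∈ edgePlus f '' (gridGraph n m).edgeSet :=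
        fun p q h => ⟨s(p, q), h, rfl⟩
      have hn2 : 2 ≤ n := by omega
      have hm2 : 3 ≤ m := hm
      intro x hx
      simp only [Set.mem_insert_iff, Set.mem_singleton_iff] at hx
      rcases hx with rfl | rfl | rfl | rfl
      · have h0 := hmem (⟨0, by omega⟩, ⟨1, by omega⟩) (⟨0, by omega⟩, ⟨2, by omega⟩)
          (grid_adj_of_nat _ _ (by simp))
        rw [hfapp, hfapp] at h0
        norm_num at h0
        obtain ⟨e, he, hv⟩ := h0
        exact ⟨e, he, by rw [hv]; try ring⟩
      · have h0 := hmem (⟨0, by omega⟩, ⟨0, by omega⟩) (⟨0, by omega⟩, ⟨1, by omega⟩)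
          (grid_adj_of_nat _ _ (by simp))
        rw [hfapp, hfapp] at h0
        norm_num at h0
        obtain ⟨e, he, hv⟩ := h0
        exact ⟨e, he, by rw [hv]; try ring⟩
      · have h0 := hmem (⟨0, by omega⟩, ⟨1, by omega⟩) (⟨1, by omega⟩, ⟨1, by omega⟩)
          (grid_adj_of_nat _ _ (by simp))
        rw [hfapp, hfapp] at h0
        norm_num at h0
        obtain ⟨e, he, hv⟩ := h0
        exact ⟨e, he, by rw [hv]; try ring⟩
      · have h0 := hmem (⟨0, by omega⟩, ⟨0, by omega⟩) (⟨1, by omega⟩, ⟨0, by omega⟩)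
          (grid_adj_of_nat _ _ (by simp))
        rw [hfapp, hfapp] at h0
        norm_num at h0
        obtain ⟨e, he, hv⟩ := h0
        exact ⟨e, he, by rw [hv]; try ring⟩
  refine ⟨f, hinj, ?_⟩
  rw [himg, Set.ncard_insert_of_notMem
      (by simp only [Set.mem_insert_iff, Set.mem_singleton_iff]; push_neg; omega),
    Set.ncard_insert_of_notMem
      (by simp only [Set.mem_insert_iff, Set.mem_singleton_iff]; push_neg; omega),
    Set.ncard_insert_of_notMem
      (by simp only [Set.mem_singleton_iff]; omega),
    Set.ncard_singleton]

theorem stmt7 (n m : ℕ) (hm : 2 ≤ m) (hnm : m ≤ n) :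
    (m = 2 → sumIndex (gridGraph n m) = 3) ∧
    (3 ≤ m → sumIndex (gridGraph n m) = 4) := by
  constructor
  · rintro rfl
    obtain ⟨f, hinj, hcard⟩ := upper_ladder n hnm
    apply le_antisymm
    · exact Nat.sInf_le ⟨f, hinj, hcard⟩
    · refine le_csInf ⟨3, f, hinj, hcard⟩ ?_
      rintro k ⟨g, hg, rfl⟩
      exact lower_three hnm (by norm_num) g hg
  · intro hm3
    obtain ⟨f, hinj, hcard⟩ := upper_grid n m hm3 hnm
    apply le_antisymm
    · exact Nat.sInf_le ⟨f, hinj, hcard⟩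
    · refine le_csInf ⟨4, f, hinj, hcard⟩ ?_
      rintro k ⟨g, hg, rfl⟩
      exact lower_four (le_trans hm3 hnm) hm3 g hg
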